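/- arXiv:1904.03687 — 4 statements merged into one kernel-verified Lean document; each statement's English description precedes it below -/
import Mathlib

section
/- Let K be a field of characteristic p > 0 and L/K a finite separable extension. Then the ring L ⊗_{K, Frob} K, where the second factor is viewed as a K-algebra via the Frobenius x ↦ x^p, is a field which is a purely inseparable extension of L (under the map a ↦ a ⊗ 1). -/
open TensorProduct

/-- `K` viewed as a `K`-algebra via the Frobenius `x ↦ x^p`. -/
def FrobTwist (K : Type*) (_p : ℕ) : Type _ := K

instance (K : Type*) (p : ℕ) [Field K] : Field (FrobTwist K p) := inferInstanceAs (Field K)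

noncomputable instance (K : Type*) (p : ℕ) [Field K] [Fact p.Prime] [CharP K p] :
    Algebra K (FrobTwist K p) := (frobenius K p).toAlgebra

/-- Universe-polymorphic version of `Algebra.FormallyUnramified.of_isSeparable`. -/
theorem myOfIsSeparable (K : Type u) (L : Type v) [Field K] [Field L] [Algebra K L]
    [Algebra.IsSeparable K L] : Algebra.FormallyUnramified K L := by
  rw [Algebra.FormallyUnramified.iff_comp_injective]
  intros B _ _ I hI f₁ f₂ e
  ext x
  have : f₁ x - f₂ x ∈ I := by
    simpa [Ideal.Quotient.mk_eq_mk_iff_sub_mem] using AlgHom.congr_fun e x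
  have := Polynomial.eval_add_of_sq_eq_zero ((minpoly K x).map (algebraMap K B)) (f₂ x)
    (f₁ x - f₂ x) (show (f₁ x - f₂ x) ^ 2 ∈ ⊥ from hI ▸ Ideal.pow_mem_pow this 2)
  simp only [add_sub_cancel, Polynomial.eval_map_algebraMap, Polynomial.aeval_algHom_apply,
    minpoly.aeval, map_zero, Polynomial.derivative_map, zero_add] at this
  rwa [eq_comm, ((isUnit_iff_ne_zero.mpr
    ((Algebra.IsSeparable.isSeparable K x).aeval_derivative_ne_zero
      (minpoly.aeval K x))).map f₂).mul_right_eq_zero, sub_eq_zero] at this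

noncomputable def uliftAlgEquiv (R A : Type*) [CommSemiring R] [Semiring A] [Algebra R A] :
    ULift A ≃ₐ[R] A :=
  { ULift.ringEquiv with commutes' := fun _ => rfl }

theorem myReduced (p : ℕ) [Fact p.Prime] (K : Type u) (L : Type v) [Field K] [Field L]
    [Algebra K L] [CharP K p] [FiniteDimensional K L] [Algebra.IsSeparable K L] :
    IsReduced (L ⊗[K] FrobTwist K p) := by
  have : Algebra.FormallyUnramified K L := myOfIsSeparable K L
  have h1 : IsReduced ((ULift.{v} (FrobTwist K p)) ⊗[K] L) :=
    Algebra.FormallyUnramified.isReduced_of_field (ULift.{v} (FrobTwist K p)) _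
  let e : (L ⊗[K] FrobTwist K p) ≃+* ((ULift.{v} (FrobTwist K p)) ⊗[K] L) :=
    ((Algebra.TensorProduct.congr (AlgEquiv.refl : L ≃ₐ[K] L)
      (uliftAlgEquiv K (FrobTwist K p)).symm).trans
      (Algebra.TensorProduct.comm K L _)).toRingEquiv
  exact isReduced_of_injective e e.injective

/-- `L ⊗_{K, Frob} K` is a field, purely inseparable over `L` via `a ↦ a ⊗ 1`. -/
theorem stmt1 (p : ℕ) [Fact p.Prime] (K L : Type*) [Field K] [Field L] [Algebra K L]
    [CharP K p] [FiniteDimensional K L] [Algebra.IsSeparable K L] :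
    IsField (L ⊗[K] FrobTwist K p) ∧
      ∀ x : L ⊗[K] FrobTwist K p, ∃ (n : ℕ) (a : L),
        x ^ p ^ n = a ⊗ₜ[K] (1 : FrobTwist K p) := by
  have hp : p ≠ 0 := (Fact.out : p.Prime).ne_zero
  haveI hred := myReduced p K L
  haveI : CharP (L ⊗[K] FrobTwist K p) p :=
    charP_of_injective_ringHom (algebraMap K (L ⊗[K] FrobTwist K p)).injective p
  have hpow : ∀ x : L ⊗[K] FrobTwist K p, ∃ a : L, x ^ p = a ⊗ₜ[K] (1 : FrobTwist K p) := by
    intro x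
    induction x using TensorProduct.induction_on with
    | zero => exact ⟨0, by rw [zero_pow hp, TensorProduct.zero_tmul]⟩
    | tmul a b =>
        refine ⟨algebraMap K L (id b : K) * a ^ p, ?_⟩
        have hb : (b : FrobTwist K p) ^ p = algebraMap K (FrobTwist K p) (id b : K) := by
          rfl
        rw [Algebra.TensorProduct.tmul_pow, hb, Algebra.algebraMap_eq_smul_one,
          TensorProduct.tmul_smul, TensorProduct.smul_tmul', Algebra.smul_def]
    | add x y hx hy =>
        obtain ⟨a, ha⟩ := hx
        obtain ⟨b, hb⟩ := hy
        exact ⟨a + b, by rw [add_pow_char, ha, hb, ← TensorProduct.add_tmul]⟩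
  refine ⟨⟨exists_pair_ne _, mul_comm, ?_⟩, fun x => by
    obtain ⟨a, ha⟩ := hpow x; exact ⟨1, a, by rwa [pow_one]⟩⟩
  intro x hx
  obtain ⟨a, ha⟩ := hpow x
  have ha0 : a ≠ 0 := by
    rintro rfl
    rw [TensorProduct.zero_tmul] at ha
    exact hx (IsNilpotent.eq_zero ⟨p, ha⟩)
  refine ⟨x ^ (p - 1) * (a⁻¹ ⊗ₜ[K] 1), ?_⟩
  rw [← mul_assoc, ← pow_succ', Nat.sub_add_cancel (Nat.one_le_iff_ne_zero.mpr hp), ha,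
    Algebra.TensorProduct.tmul_mul_tmul, mul_inv_cancel₀ ha0, mul_one,
    ← Algebra.TensorProduct.one_def]
end

section
/- Let K be a field of characteristic p > 0 with [K : K^p] finite, and let E be an intermediate field with K^p ⊆ E ⊆ K. Then the canonical surjection Ω_{K/K^p} → Ω_{K/E} is an isomorphism if and only if E = K^p. -/
open Polynomial

lemma aux_minpoly {F K : Type*} [Field F] [Field K] [Algebra F K] {p : ℕ} [Fact p.Prime]
    [CharP K p] {y : K} (hy : y ∉ (algebraMap F K).range) {c : F}
    (hc : algebraMap F K c = y ^ p) : minpoly F y = X ^ p - C c := by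
  have hp : p.Prime := Fact.out
  have hmono : (X ^ p - C c : F[X]).Monic := monic_X_pow_sub_C c hp.ne_zero
  have haev : (Polynomial.aeval y) (X ^ p - C c : F[X]) = 0 := by
    simp [hc]
  have hint : IsIntegral F y := ⟨X ^ p - C c, hmono, haev⟩
  have hdvd : minpoly F y ∣ X ^ p - C c := minpoly.dvd F y haev
  have hmapeq : (X ^ p - C c : F[X]).map (algebraMap F K) = (X - C y) ^ p := by
    rw [sub_pow_char]
    rw [Polynomial.map_sub, Polynomial.map_pow, map_X, map_C, hc, map_pow]
  -- map m = (X - C y) ^ d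
  obtain ⟨d, hdp, hassoc⟩ := (dvd_prime_pow (prime_X_sub_C y) p).mp
    (hmapeq ▸ Polynomial.map_dvd (algebraMap F K) hdvd)
  have hmonic : (minpoly F y).Monic := minpoly.monic hint
  have hmeq : (minpoly F y).map (algebraMap F K) = (X - C y) ^ d :=
    Polynomial.eq_of_monic_of_associated (hmonic.map _) ((monic_X_sub_C y).pow d) hassoc
  have hd1 : 1 ≤ d := by
    rcases Nat.eq_zero_or_pos d with h0 | h; swap; · exact h
    exfalso
    have := congrArg natDegree hmeq
    rw [natDegree_map, h0, pow_zero, natDegree_one] at this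
    exact (minpoly.natDegree_pos hint).ne' this
  have hdeq : d = p := by
    by_contra hne
    have hdlt : d < p := lt_of_le_of_ne hdp hne
    -- look at nextCoeff
    have hnc := congrArg nextCoeff hmeq
    rw [Monic.nextCoeff_pow (monic_X_sub_C y), nextCoeff_X_sub_C] at hnc
    have hncmap : ((minpoly F y).map (algebraMap F K)).nextCoeff
        = algebraMap F K ((minpoly F y).nextCoeff) := by
      unfold nextCoeff
      rw [natDegree_map]
      split <;> simp [Polynomial.coeff_map]
    rw [hncmap] at hnc
    have hdne : (d : K) ≠ 0 := by
      rw [Ne, CharP.cast_eq_zero_iff K p d]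
      exact fun h => Nat.not_dvd_of_pos_of_lt hd1 hdlt h
    apply hy
    refine ⟨-((minpoly F y).nextCoeff) / (d : F), ?_⟩
    rw [map_div₀, map_neg, hnc, map_natCast, nsmul_eq_mul, mul_neg, neg_neg]
    field_simp
  -- conclude
  subst hdeq
  have := hmapeq ▸ hmeq
  exact Polynomial.map_injective _ (algebraMap F K).injective this

lemma aux_derivation {F K : Type*} [Field F] [Field K] [Algebra F K] {p : ℕ} [Fact p.Prime]
    [CharP K p] {x : K} (hx : x ∉ (algebraMap F K).range)
    (hxp : x ^ p ∈ (algebraMap F K).range)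
    (hadj : ∀ y : K, y ∈ Algebra.adjoin F {x}) :
    ∃ δ : Derivation F K K, δ x = 1 := by
  obtain ⟨c, hc⟩ := hxp
  have hmin : minpoly F x = X ^ p - C c := aux_minpoly hx hc
  haveI hCharF : CharP F p := (algebraMap F K).charP (algebraMap F K).injective p
  have hder : derivative (minpoly F x) = 0 := by
    rw [hmin, derivative_sub, derivative_C, derivative_X_pow, sub_zero]
    simp [CharP.cast_eq_zero F p]
  have hint : IsIntegral F x := by
    refine ⟨X ^ p - C c, monic_X_pow_sub_C c (Fact.out : p.Prime).ne_zero, ?_⟩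
    simp [hc]
  have hsurj : Function.Surjective (Polynomial.aeval x : F[X] →ₐ[F] K) := by
    intro y
    have h := hadj y
    rw [Algebra.adjoin_singleton_eq_range_aeval] at h
    exact h
  have hd : ∀ g : F[X], (Polynomial.aeval x : F[X] →ₐ[F] K) g = 0 →
      (Polynomial.aeval x : F[X] →ₐ[F] K) (Polynomial.derivative' g) = 0 := by
    intro g hg
    obtain ⟨q, rfl⟩ := minpoly.dvd F x hg
    have : Polynomial.derivative' (minpoly F x * q) = derivative (minpoly F x * q) := rfl
    rw [this, derivative_mul, hder, zero_mul, zero_add, map_mul, minpoly.aeval, zero_mul]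
  refine ⟨Derivation.liftOfSurjective (f := (Polynomial.aeval x : F[X] →ₐ[F] K)) hsurj hd, ?_⟩
  have h2 := Derivation.liftOfSurjective_apply hsurj hd X
  have h3 : (Polynomial.aeval x : F[X] →ₐ[F] K) X = x := by simp
  have h4 : (Polynomial.aeval x : F[X] →ₐ[F] K) (Polynomial.derivative' X) = 1 := by
    show (Polynomial.aeval x : F[X] →ₐ[F] K) (derivative X) = 1
    simp
  rw [h3, h4] at h2
  exact h2

lemma aux_exists_derivation {k K : Type*} [Field k] [Field K] [Algebra k K] {p : ℕ}
    [Fact p.Prime] [CharP K p] [FiniteDimensional k K]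
    (hp : ∀ z : K, z ^ p ∈ (algebraMap k K).range)
    {x : K} (hx : x ∉ (algebraMap k K).range) :
    ∃ δ : Derivation k K K, δ x = 1 := by
  classical
  set S : Set (IntermediateField k K) := {F | x ∉ F} with hS
  have hbot : (⊥ : IntermediateField k K) ∈ S := by
    simp only [hS, Set.mem_setOf_eq, IntermediateField.mem_bot]
    exact fun ⟨a, ha⟩ => hx ⟨a, ha⟩
  set T : Set ℕ := (fun F : IntermediateField k K => Module.finrank k F) '' S with hT
  have hTne : T.Nonempty := ⟨_, ⟨⊥, hbot, rfl⟩⟩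
  have hTbdd : BddAbove T := by
    refine ⟨Module.finrank k K, ?_⟩
    rintro n ⟨F, _, rfl⟩
    exact Submodule.finrank_le (Subalgebra.toSubmodule F.toSubalgebra)
  obtain ⟨F, hFS, hFrank⟩ := Nat.sSup_mem hTne hTbdd
  have hmax : ∀ G : IntermediateField k K, F < G → x ∈ G := by
    intro G hFG
    by_contra hxG
    have h1 : Module.finrank k G ≤ sSup T := le_csSup hTbdd ⟨G, hxG, rfl⟩
    have h2 : Module.finrank k F < Module.finrank k G := by
      obtain ⟨hle, z, hzG, hzF⟩ := SetLike.lt_iff_le_and_exists.mp hFG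
      exact Submodule.finrank_lt_finrank_of_lt (s := Subalgebra.toSubmodule F.toSubalgebra)
        (t := Subalgebra.toSubmodule G.toSubalgebra)
        (SetLike.lt_iff_le_and_exists.mpr ⟨fun w hw => hle hw, z, hzG, hzF⟩)
    simp only [] at hFrank
    rw [hFrank] at h2
    exact absurd h1 (not_le.mpr h2)
  -- now work over F
  haveI : FiniteDimensional (↥F) K := FiniteDimensional.right k (↥F) K
  have hxF : x ∉ (algebraMap (↥F) K).range := by
    rintro ⟨⟨z, hz⟩, rfl⟩
    exact hFS hz
  have hrange : ∀ y : K, y ∈ F → y ∈ (algebraMap (↥F) K).range :=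
    fun y hy => ⟨⟨y, hy⟩, rfl⟩
  have hmemF : ∀ z : K, z ^ p ∈ F := by
    intro z
    obtain ⟨a, ha⟩ := hp z
    exact ha ▸ F.algebraMap_mem a
  have hxpF : x ^ p ∈ (algebraMap (↥F) K).range := hrange _ (hmemF x)
  have hadj : ∀ y : K, y ∈ Algebra.adjoin (↥F) {x} := by
    intro y
    by_cases hy : y ∈ F
    · obtain ⟨a, ha⟩ := hrange y hy
      exact ha ▸ Subalgebra.algebraMap_mem _ a
    · have hyF : y ∉ (algebraMap (↥F) K).range := by
        rintro ⟨⟨z, hz⟩, rfl⟩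
        exact hy hz
      obtain ⟨cy, hcy⟩ := hrange _ (hmemF y)
      obtain ⟨cx, hcx⟩ := hrange _ (hmemF x)
      have hminy := aux_minpoly (p := p) hyF hcy
      have hminx := aux_minpoly (p := p) hxF hcx
      have hinty : IsIntegral (↥F) y := by
        refine ⟨X ^ p - C cy, monic_X_pow_sub_C cy (Fact.out : p.Prime).ne_zero, ?_⟩
        simp [hcy]
      have hintx : IsIntegral (↥F) x := by
        refine ⟨X ^ p - C cx, monic_X_pow_sub_C cx (Fact.out : p.Prime).ne_zero, ?_⟩
        simp [hcx]
      -- x ∈ F⟮y⟯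
      have hxFy : x ∈ IntermediateField.adjoin (↥F) {y} := by
        have hlt : F < ((IntermediateField.adjoin (↥F) {y}).restrictScalars k) := by
          refine SetLike.lt_iff_le_and_exists.mpr ⟨?_, y, ?_, hy⟩
          · intro z hz
            obtain ⟨a, ha⟩ := hrange z hz
            exact ha ▸ (IntermediateField.adjoin (↥F) {y}).algebraMap_mem a
          · exact IntermediateField.mem_adjoin_simple_self (↥F) y
        exact hmax _ hlt
      have hle : IntermediateField.adjoin (↥F) {x} ≤ IntermediateField.adjoin (↥F) {y} :=
        IntermediateField.adjoin_simple_le_iff.mpr hxFy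
      have hfr : Module.finrank (↥F) (IntermediateField.adjoin (↥F) {x})
          = Module.finrank (↥F) (IntermediateField.adjoin (↥F) {y}) := by
        rw [IntermediateField.adjoin.finrank hintx, IntermediateField.adjoin.finrank hinty,
          hminx, hminy, natDegree_X_pow_sub_C, natDegree_X_pow_sub_C]
      have heq := IntermediateField.eq_of_le_of_finrank_eq hle hfr
      have hyFx : y ∈ IntermediateField.adjoin (↥F) {x} :=
        heq ▸ IntermediateField.mem_adjoin_simple_self (↥F) y
      rw [← IntermediateField.adjoin_simple_toSubalgebra_of_isAlgebraic hintx.isAlgebraic]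
      exact hyFx
  obtain ⟨δ, hδ⟩ := aux_derivation hxF hxpF hadj
  exact ⟨δ.restrictScalars k, hδ⟩

/-- Let `K` be a field of characteristic `p > 0` with `[K : K^p]` finite and
`K^p ⊆ E ⊆ K`.  The canonical surjection `Ω_{K/K^p} → Ω_{K/E}` is an isomorphism
if and only if `E = K^p`. -/
theorem stmt4 (p : ℕ) [Fact p.Prime] (K : Type*) [Field K] [CharP K p]
    (E : Subfield K) (hE : (frobenius K p).fieldRange ≤ E)
    (hfin : FiniteDimensional (↥(frobenius K p).fieldRange) K) :
    (letI : Algebra ↥(frobenius K p).fieldRange ↥E := (Subfield.inclusion hE).toAlgebra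
     letI : IsScalarTower ↥(frobenius K p).fieldRange ↥E K :=
       IsScalarTower.of_algebraMap_eq fun x => rfl
     Function.Bijective (KaehlerDifferential.map ↥(frobenius K p).fieldRange ↥E K K))
      ↔ E = (frobenius K p).fieldRange := by
  letI : Algebra ↥(frobenius K p).fieldRange ↥E := (Subfield.inclusion hE).toAlgebra
  letI : IsScalarTower ↥(frobenius K p).fieldRange ↥E K :=
    IsScalarTower.of_algebraMap_eq fun x => rfl
  constructor
  · intro hbij
    refine le_antisymm ?_ hE
    intro x hxE
    by_contra hx
    have hx' : x ∉ (algebraMap ↥(frobenius K p).fieldRange K).range := by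
      rintro ⟨⟨z, hz⟩, rfl⟩
      exact hx hz
    have hp : ∀ z : K, z ^ p ∈ (algebraMap ↥(frobenius K p).fieldRange K).range :=
      fun z => ⟨⟨z ^ p, ⟨z, rfl⟩⟩, rfl⟩
    obtain ⟨δ, hδ⟩ := aux_exists_derivation hp hx'
    have hDE : KaehlerDifferential.D ↥E K x = 0 := by
      have hxe : x = algebraMap ↥E K ⟨x, hxE⟩ := rfl
      rw [hxe]
      exact Derivation.map_algebraMap _ _
    have hmapD := KaehlerDifferential.map_D ↥(frobenius K p).fieldRange ↥E K K x
    simp only [Algebra.algebraMap_self, RingHom.id_apply] at hmapD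
    rw [hDE] at hmapD
    have hD0 : KaehlerDifferential.D ↥(frobenius K p).fieldRange K x = 0 := by
      apply hbij.injective
      rw [hmapD, map_zero]
    have := δ.liftKaehlerDifferential_comp_D x
    rw [hD0, map_zero, hδ] at this
    exact one_ne_zero this.symm
  · rintro rfl
    have key : ∀ z : Ω[K⁄↥(frobenius K p).fieldRange],
        KaehlerDifferential.map ↥(frobenius K p).fieldRange ↥(frobenius K p).fieldRange K K z
          = z := by
      intro z
      have hz : z ∈ (⊤ : Submodule K (Ω[K⁄↥(frobenius K p).fieldRange])) := trivial
      rw [← KaehlerDifferential.span_range_derivation] at hz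
      induction hz using Submodule.span_induction with
      | mem w hw =>
        obtain ⟨a, rfl⟩ := hw
        rw [KaehlerDifferential.map_D]
        simp
      | zero => rw [map_zero]
      | add u v _ _ hu hv => rw [map_add, hu, hv]
      | smul a u _ hu => rw [map_smul, hu]
    exact ⟨fun a b hab => by rw [← key a, ← key b, hab], fun z => ⟨z, key z⟩⟩
end

section
/- Let R be a noetherian normal domain with fraction field K, and let M, N be finite free R-modules. A K-linear map m : M ⊗_R K → N ⊗_R K arises from an R-linear map M → N if and only if for every height-one prime 𝔭 of R, the map m carries the image of M ⊗_R R_𝔭 into the image of N ⊗_R R_𝔭. -/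
open TensorProduct

open scoped nonZeroDivisors

section core
variable {R K : Type*} [CommRing R] [IsDomain R] [IsNoetherianRing R]
    [IsIntegrallyClosed R] [Field K] [Algebra R K] [IsFractionRing R K]

/-- the denominator ideal of `b : K`. -/
noncomputable def denomIdeal (R : Type*) {K : Type*} [CommRing R] [CommRing K] [Algebra R K]
    (b : K) : Ideal R :=
  Submodule.comap (LinearMap.toSpanSingleton R K b) (LinearMap.range (Algebra.linearMap R K))

lemma mem_denomIdeal {R K : Type*} [CommRing R] [CommRing K] [Algebra R K] {b : K} {r : R} :
    r ∈ denomIdeal R b ↔ ∃ v : R, algebraMap R K v = r • b := by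
  simp [denomIdeal, LinearMap.toSpanSingleton_apply]

lemma exists_heightOne {a : K} (ha : ¬ ∃ v : R, algebraMap R K v = a) :
    ∃ p : Ideal R, p.IsPrime ∧ p ≠ ⊥ ∧ (∀ q : Ideal R, q.IsPrime → q < p → q = ⊥) ∧
      denomIdeal R a ≤ p := by
  classical
  have hinj : Function.Injective (algebraMap R K) := IsFractionRing.injective R K
  set S : Set (Ideal R) :=
    {I | ∃ b : K, (¬ ∃ v : R, algebraMap R K v = b) ∧ denomIdeal R a ≤ denomIdeal R b ∧
      I = denomIdeal R b} with hS
  have hne : S.Nonempty := ⟨denomIdeal R a, a, ha, le_rfl, rfl⟩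
  obtain ⟨p, hpS, hpmax⟩ :=
    (set_has_maximal_iff_noetherian.mpr (inferInstance : IsNoetherian R R)) S hne
  obtain ⟨b, hb, hab, rfl⟩ := hpS
  have hprime : (denomIdeal R b).IsPrime := by
    constructor
    · intro htop
      have h1 : (1 : R) ∈ denomIdeal R b := (Ideal.eq_top_iff_one _).mp htop
      rw [mem_denomIdeal, one_smul] at h1
      exact hb h1
    · intro r s hrs
      by_cases hr : r ∈ denomIdeal R b
      · exact Or.inl hr
      · right
        have hrb : ¬ ∃ v : R, algebraMap R K v = r • b := fun hv => hr (mem_denomIdeal.mpr hv)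
        have hle : denomIdeal R b ≤ denomIdeal R (r • b) := by
          intro w hw
          rw [mem_denomIdeal] at hw ⊢
          obtain ⟨v, hv⟩ := hw
          refine ⟨r * v, ?_⟩
          rw [map_mul, hv, ← Algebra.smul_def, smul_comm]
        have hmem : denomIdeal R (r • b) ∈ S := ⟨r • b, hrb, le_trans hab hle, rfl⟩
        have heq : denomIdeal R b = denomIdeal R (r • b) :=
          (hle.lt_or_eq.resolve_left (hpmax _ hmem))
        rw [heq, mem_denomIdeal]
        rw [mem_denomIdeal] at hrs
        obtain ⟨v, hv⟩ := hrs
        exact ⟨v, by rw [hv, smul_smul, mul_comm s r]⟩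
  refine ⟨denomIdeal R b, hprime, ?_, ?_, hab⟩
  · obtain ⟨⟨y, hy⟩, x, hx⟩ := IsLocalization.exists_integer_multiple R⁰ b
    intro hbot
    have hyd : y ∈ denomIdeal R b := mem_denomIdeal.mpr ⟨x, by simpa using hx⟩
    rw [hbot, Ideal.mem_bot] at hyd
    exact mem_nonZeroDivisors_iff_ne_zero.mp hy hyd
  · intro q hq hqp
    obtain ⟨t, ht, u, hu, hup⟩ :
        ∃ t ∈ denomIdeal R b, ∃ u : R, algebraMap R K u = t • b ∧ u ∉ denomIdeal R b := by
      by_contra hcon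
      push_neg at hcon
      set pK : Submodule R K := Submodule.map (Algebra.linearMap R K) (denomIdeal R b) with hpK
      have hsmul : ∀ y ∈ pK, b • y ∈ pK := by
        rintro y ⟨r, hr, rfl⟩
        obtain ⟨v, hv⟩ := mem_denomIdeal.mp hr
        have hv' : v ∈ denomIdeal R b := hcon r hr v hv
        refine ⟨v, hv', ?_⟩
        simp only [Algebra.linearMap_apply, smul_eq_mul] at hv ⊢
        rw [hv, Algebra.smul_def, mul_comm]
      have hbot : pK ≠ ⊥ := by
        obtain ⟨⟨y, hy⟩, x, hx⟩ := IsLocalization.exists_integer_multiple R⁰ b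
        have hyd : y ∈ denomIdeal R b := mem_denomIdeal.mpr ⟨x, by simpa using hx⟩
        intro h0
        have : algebraMap R K y ∈ pK := ⟨y, hyd, rfl⟩
        rw [h0, Submodule.mem_bot] at this
        exact mem_nonZeroDivisors_iff_ne_zero.mp hy (hinj (by simpa using this))
      have hfg : pK.FG := (IsNoetherian.noetherian (denomIdeal R b)).map _
      have hint : IsIntegral R b :=
        isIntegral_of_smul_mem_submodule pK hbot hfg b hsmul
      obtain ⟨v, hv⟩ := IsIntegrallyClosed.isIntegral_iff.mp hint
      exact hb ⟨v, hv⟩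
    have key : ∀ r ∈ denomIdeal R b, ∃ v : R, algebraMap R K v = r • b ∧ r * u = t * v := by
      intro r hr
      obtain ⟨v, hv⟩ := mem_denomIdeal.mp hr
      refine ⟨v, hv, hinj ?_⟩
      rw [map_mul, map_mul, hu, hv, Algebra.smul_def, Algebra.smul_def]
      ring
    by_cases htq : t ∈ q
    · exfalso
      have hpq : denomIdeal R b ≤ q := by
        intro r hr
        obtain ⟨v, hv, hru⟩ := key r hr
        have hmem : r * u ∈ q := hru ▸ Ideal.mul_mem_right v q htq
        rcases hq.mem_or_mem hmem with h | h
        · exact h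
        · exact absurd (hqp.le h) hup
      exact lt_irrefl _ (lt_of_lt_of_le hqp hpq)
    · by_contra hq0
      obtain ⟨w, hwq, hw0⟩ : ∃ w ∈ q, w ≠ 0 := Submodule.exists_mem_ne_zero_of_ne_bot hq0
      have ht0 : t ≠ 0 := by
        rintro rfl
        have hu0 : u = 0 := hinj (by rw [hu, zero_smul, map_zero])
        exact hup (hu0 ▸ (denomIdeal R b).zero_mem)
      have htK : algebraMap R K t ≠ 0 := fun h => ht0 (hinj (by rw [h, map_zero]))
      have hchain : ∀ n : ℕ, ∃ wn ∈ q, u ^ n * w = t ^ n * wn := by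
        intro n
        induction n with
        | zero => exact ⟨w, hwq, by ring⟩
        | succ n ih =>
          obtain ⟨wn, hwn, hwe⟩ := ih
          obtain ⟨v, hv, hvu⟩ := key wn (hqp.le hwn)
          have hvq : v ∈ q := by
            have hmem : t * v ∈ q := hvu ▸ Ideal.mul_mem_right u q hwn
            exact (hq.mem_or_mem hmem).resolve_left htq
          exact ⟨v, hvq, by linear_combination u * hwe + t ^ n * hvu⟩
      set d : K := algebraMap R K u / algebraMap R K t with hd
      have hdn : ∀ n : ℕ, ∃ wn : R, algebraMap R K w * d ^ n = algebraMap R K wn := by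
        intro n
        obtain ⟨wn, _, hwe⟩ := hchain n
        refine ⟨wn, ?_⟩
        rw [hd, div_pow, mul_div_assoc', div_eq_iff (pow_ne_zero n htK),
          ← map_pow, ← map_mul, ← map_pow, ← map_mul]
        exact congrArg _ (by linear_combination hwe)
      set NN : Submodule R K := Submodule.span R (Set.range fun n : ℕ => d ^ n) with hNN
      have hdNN : ∀ y ∈ NN, d • y ∈ NN := by
        intro y hy
        induction hy using Submodule.span_induction with
        | mem x hx =>
          obtain ⟨n, rfl⟩ := hx
          have hdd : d • d ^ n = d ^ (n + 1) := by rw [smul_eq_mul, pow_succ, mul_comm]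
          rw [hdd]
          exact Submodule.subset_span ⟨n + 1, rfl⟩
        | zero => rw [smul_zero]; exact NN.zero_mem
        | add x y _ _ hx hy => rw [smul_add]; exact NN.add_mem hx hy
        | smul r x _ hx => rw [smul_comm]; exact NN.smul_mem r hx
      have hNNbot : NN ≠ ⊥ := by
        intro h
        have h1 : (1 : K) ∈ NN := Submodule.subset_span ⟨0, by simp⟩
        rw [h, Submodule.mem_bot] at h1
        exact one_ne_zero h1
      have hwK : algebraMap R K w ≠ 0 := fun h => hw0 (hinj (by rw [h, map_zero]))
      set φ : K →ₗ[R] K := LinearMap.mulLeft R (algebraMap R K w) with hφ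
      have hφinj : Function.Injective φ := fun x y hxy => by
        simpa [hφ] using mul_left_cancel₀ hwK hxy
      have hRim : (LinearMap.range (Algebra.linearMap R K)).FG := by
        refine ⟨{1}, ?_⟩
        ext x
        simp [Submodule.mem_span_singleton, Algebra.smul_def, eq_comm]
      have hmaple : Submodule.map φ NN ≤ LinearMap.range (Algebra.linearMap R K) := by
        rw [hNN, Submodule.map_span, Submodule.span_le]
        rintro y ⟨x, ⟨n, rfl⟩, rfl⟩
        obtain ⟨wn, hwn⟩ := hdn n
        exact ⟨wn, by simpa [hφ] using hwn.symm⟩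
      haveI : IsNoetherian R (LinearMap.range (Algebra.linearMap R K)) :=
        isNoetherian_of_fg_of_noetherian _ hRim
      have hmapfg : (Submodule.map φ NN).FG := by
        have heq2 : Submodule.map (LinearMap.range (Algebra.linearMap R K)).subtype
            (Submodule.comap (LinearMap.range (Algebra.linearMap R K)).subtype
              (Submodule.map φ NN)) = Submodule.map φ NN := by
          rw [Submodule.map_comap_subtype, inf_eq_right.mpr hmaple]
        rw [← heq2]
        exact (IsNoetherian.noetherian _).map _
      have hNNfg : NN.FG := Submodule.fg_of_fg_map_injective φ hφinj hmapfg
      have hint : IsIntegral R d := isIntegral_of_smul_mem_submodule NN hNNbot hNNfg d hdNN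
      obtain ⟨e, he⟩ := IsIntegrallyClosed.isIntegral_iff.mp hint
      have hue : u = t * e := by
        apply hinj
        rw [map_mul, he, hd]
        field_simp
      exact hup (hue ▸ Ideal.mul_mem_right e _ ht)

lemma claimA {a : K}
    (H : ∀ p : Ideal R, p.IsPrime → p ≠ ⊥ → (∀ q : Ideal R, q.IsPrime → q < p → q = ⊥) →
      ∃ s : R, s ∉ p ∧ ∃ v : R, algebraMap R K v = s • a) :
    ∃ v : R, algebraMap R K v = a := by
  by_contra ha
  obtain ⟨p, hp, hp0, hp1, hle⟩ := exists_heightOne ha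
  obtain ⟨s, hs, v, hv⟩ := H p hp hp0 hp1
  exact hs (hle (mem_denomIdeal.mpr ⟨v, hv⟩))

end core

/-- Let `R` be a noetherian normal domain with fraction field `K`, and `M`, `N` finite free
`R`-modules.  A `K`-linear map `m : M ⊗ K → N ⊗ K` (realised as `K ⊗[R] M →ₗ[K] K ⊗[R] N`)
arises from an `R`-linear map `M → N` iff for every height-one prime `𝔭` it carries the
image of `M ⊗ R_𝔭` into the image of `N ⊗ R_𝔭` (an element lies in the image of `M ⊗ R_𝔭`
iff some `s ∉ 𝔭` clears its denominators into the image of `M`). -/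
theorem stmt7 (R K M N : Type*) [CommRing R] [IsDomain R] [IsNoetherianRing R]
    [IsIntegrallyClosed R] [Field K] [Algebra R K] [IsFractionRing R K]
    [AddCommGroup M] [Module R M] [Module.Free R M] [Module.Finite R M]
    [AddCommGroup N] [Module R N] [Module.Free R N] [Module.Finite R N]
    (m : K ⊗[R] M →ₗ[K] K ⊗[R] N) :
    (∃ f : M →ₗ[R] N, ∀ x : M, m (1 ⊗ₜ x) = 1 ⊗ₜ f x) ↔
      (∀ p : Ideal R, p.IsPrime → p ≠ ⊥ →
        (∀ q : Ideal R, q.IsPrime → q < p → q = ⊥) →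
        ∀ x : K ⊗[R] M,
          (∃ s : R, s ∉ p ∧ ∃ m₀ : M, algebraMap R K s • x = 1 ⊗ₜ m₀) →
          ∃ s : R, s ∉ p ∧ ∃ n₀ : N, algebraMap R K s • m x = 1 ⊗ₜ n₀) := by

  constructor
  · rintro ⟨f, hf⟩ p hp hp0 hp1 x ⟨s, hs, m₀, hsx⟩
    refine ⟨s, hs, f m₀, ?_⟩
    rw [← map_smul, hsx, hf]
  · intro H
    classical
    have hinj : Function.Injective (algebraMap R K) := IsFractionRing.injective R K
    set ι := Module.Free.ChooseBasisIndex R N with hι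
    set bN : Module.Basis ι R N := Module.Free.chooseBasis R N with hbN
    set bK : Module.Basis ι K (K ⊗[R] N) := bN.baseChange K with hbK
    have hco : ∀ (n : N) (i : ι), bK.repr (1 ⊗ₜ[R] n) i = algebraMap R K (bN.repr n i) := by
      intro n i
      rw [hbK, Module.Basis.baseChange_repr_tmul, Algebra.smul_def, mul_one]
    have hrange : ∀ y : K ⊗[R] N, (∀ i, ∃ v : R, algebraMap R K v = bK.repr y i) →
        ∃ n : N, y = 1 ⊗ₜ[R] n := by
      intro y hy
      choose v hv using hy
      refine ⟨bN.repr.symm (Finsupp.equivFunOnFinite.symm v), ?_⟩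
      apply bK.repr.injective
      ext i
      rw [hco, LinearEquiv.apply_symm_apply]
      simp [← hv i]
    have hmain : ∀ mm : M, ∃ n : N, m (1 ⊗ₜ[R] mm) = 1 ⊗ₜ[R] n := by
      intro mm
      apply hrange
      intro i
      apply claimA
      intro p hp hp0 hp1
      obtain ⟨s, hs, n₀, hsn⟩ := H p hp hp0 hp1 (1 ⊗ₜ mm)
        ⟨1, fun h1 => hp.ne_top ((Ideal.eq_top_iff_one p).mpr h1), mm, by rw [map_one, one_smul]⟩
      refine ⟨s, hs, bN.repr n₀ i, ?_⟩
      calc algebraMap R K (bN.repr n₀ i) = bK.repr (1 ⊗ₜ n₀) i := (hco _ _).symm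
        _ = bK.repr (algebraMap R K s • m (1 ⊗ₜ mm)) i := by rw [hsn]
        _ = algebraMap R K s • bK.repr (m (1 ⊗ₜ mm)) i := by rw [map_smul, Finsupp.smul_apply]
        _ = s • bK.repr (m (1 ⊗ₜ mm)) i := by rw [algebraMap_smul]
    set ιN : N →ₗ[R] K ⊗[R] N := TensorProduct.mk R K N 1 with hιN
    have hιinj : Function.Injective ιN := by
      intro n₁ n₂ h
      simp only [hιN, TensorProduct.mk_apply] at h
      have h' : ∀ i, algebraMap R K (bN.repr n₁ i) = algebraMap R K (bN.repr n₂ i) := by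
        intro i
        rw [← hco, ← hco]
        exact congrArg (fun z => bK.repr z i) h
      apply bN.repr.injective
      ext i
      exact hinj (h' i)
    set g : M →ₗ[R] K ⊗[R] N := (m.restrictScalars R).comp (TensorProduct.mk R K M 1) with hg
    have hgr : ∀ x : M, g x ∈ LinearMap.range ιN := by
      intro x
      obtain ⟨n, hn⟩ := hmain x
      exact ⟨n, by simp [hιN, hg, hn]⟩
    set e := LinearEquiv.ofInjective ιN hιinj with he
    refine ⟨e.symm.toLinearMap.comp (g.codRestrict _ hgr), ?_⟩
    intro x
    have h1 : ιN (e.symm ⟨g x, hgr x⟩) = g x := by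
      calc ιN (e.symm ⟨g x, hgr x⟩)
          = (e (e.symm ⟨g x, hgr x⟩) : K ⊗[R] N) := by rw [he, LinearEquiv.ofInjective_apply]
        _ = g x := by rw [LinearEquiv.apply_symm_apply]
    exact h1.symm
end

section
/- Let K be a field of characteristic p > 0 with [K : K^p] = p^r finite, and let κ be a field with K^p ⊆ κ ⊆ K. Let s = Spec κ viewed as a K^p-scheme, with the map Spec K → Spec κ coming from the inclusion κ ⊆ K. Then p^{d} = [K : κ] where d = dim_K Ω, and Ω is the cokernel of the canonical map Ω_{κ/K^p} ⊗_κ K → Ω_{K/K^p}; in particular dim_K Ω = r if and only if κ = K^p. -/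
open TensorProduct

set_option synthInstance.maxHeartbeats 1000000
set_option maxHeartbeats 2000000

section Aux

open Polynomial IntermediateField

variable (p : ℕ) [Fact p.Prime] {F K : Type*} [Field F] [Field K] [Algebra F K] [CharP K p]

lemma aux_adjoin_finrank (x : K) (hx : x ∉ (algebraMap F K).range)
    (hxp : x ^ p ∈ (algebraMap F K).range) :
    Module.finrank F F⟮x⟯ = p := by
  have hp : p.Prime := Fact.out
  haveI : CharP F p := (algebraMap F K).charP (algebraMap F K).injective p
  haveI : ExpChar F p := ExpChar.prime hp
  obtain ⟨a, ha⟩ := hxp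
  have hint : IsIntegral F x := ⟨X ^ p - C a, (monic_X_pow _).sub_of_left (by
      simpa using (degree_C_le).trans_lt (by exact_mod_cast Nat.cast_pos.mpr hp.pos)), by
      simp [ha]⟩
  have hsep : (minpoly F x).natSepDegree = 1 := by
    rw [← mem_perfectClosure_iff_natSepDegree_eq_one, mem_perfectClosure_iff_pow_mem p]
    exact ⟨1, by simpa using ⟨a, ha⟩⟩
  obtain ⟨n, y, hmin⟩ := (minpoly.natSepDegree_eq_one_iff_eq_X_pow_sub_C p).1 hsep
  have hdeg : (minpoly F x).natDegree = p ^ n := by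
    rw [hmin]; exact natDegree_X_pow_sub_C
  have hdvd : minpoly F x ∣ X ^ p - C a := minpoly.dvd F x (by simp [ha])
  have hle : (minpoly F x).natDegree ≤ p := by
    have := natDegree_le_of_dvd hdvd (X_pow_sub_C_ne_zero hp.pos a)
    simpa [natDegree_X_pow_sub_C] using this
  have hn1 : n = 1 := by
    rcases Nat.lt_or_ge n 1 with h | h
    · interval_cases n
      · exfalso
        apply hx
        rw [← minpoly.degree_eq_one_iff]
        rw [hmin]; simpa using degree_X_pow_sub_C (by norm_num) y
    · refine le_antisymm ?_ h
      by_contra h2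
      push_neg at h2
      have : p ^ 2 ≤ p ^ n := Nat.pow_le_pow_right hp.pos h2
      have : p ^ 2 ≤ p := by omega
      have := hp.two_le
      nlinarith [sq_nonneg p]
  rw [adjoin.finrank hint, hdeg, hn1, pow_one]

lemma aux_span_D (x : K) (hadj : Algebra.adjoin F {x} = ⊤) :
    Submodule.span K {KaehlerDifferential.D F K x} = ⊤ := by
  rw [← top_le_iff, ← KaehlerDifferential.span_range_derivation, Submodule.span_le]
  rintro _ ⟨y, rfl⟩
  have hy : y ∈ Algebra.adjoin F ({x} : Set K) := hadj ▸ trivial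
  induction hy using Algebra.adjoin_induction with
  | mem z hz => rcases hz with rfl; exact Submodule.mem_span_singleton_self _
  | algebraMap r => simp
  | add a b _ _ ha hb => rw [map_add]; exact add_mem ha hb
  | mul a b _ _ ha hb =>
      rw [Derivation.leibniz]
      exact add_mem (Submodule.smul_mem _ _ hb) (Submodule.smul_mem _ _ ha)

lemma aux_D_ne_zero [FiniteDimensional F K] (x : K) (hx : x ∉ (algebraMap F K).range)
    (hall : ∀ y : K, y ^ p ∈ (algebraMap F K).range) :
    KaehlerDifferential.D F K x ≠ 0 := by
  have hp : p.Prime := Fact.out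
  -- choose `E` of maximal finrank among intermediate fields not containing `x`
  set S : Set ℕ := {n | ∃ E : IntermediateField F K, x ∉ E ∧ Module.finrank F E = n} with hS
  have hne : S.Nonempty := ⟨_, ⊥, by simpa [IntermediateField.mem_bot] using hx, rfl⟩
  have hbdd : BddAbove S := by
    refine ⟨Module.finrank F K, ?_⟩
    rintro n ⟨E, -, rfl⟩
    exact Submodule.finrank_le (Subalgebra.toSubmodule E.toSubalgebra)
  obtain ⟨E, hxE, hEr⟩ : sSup S ∈ S := Nat.sSup_mem hne hbdd
  have hmax : ∀ E' : IntermediateField F K, E < E' → x ∈ E' := by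
    intro E' hlt
    by_contra hxE'
    have h1 : Module.finrank F E' ≤ sSup S := le_csSup hbdd ⟨E', hxE', rfl⟩
    obtain ⟨hle', z, hz1, hz2⟩ := SetLike.lt_iff_le_and_exists.mp hlt
    have hmod : Subalgebra.toSubmodule E.toSubalgebra < Subalgebra.toSubmodule E'.toSubalgebra :=
      SetLike.lt_iff_le_and_exists.mpr ⟨fun w hw => hle' hw, z, hz1, hz2⟩
    have h2 : Module.finrank F E < Module.finrank F E' :=
      Submodule.finrank_lt_finrank_of_lt hmod
    omega
  -- membership in range of algebraMap of an intermediate field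
  have hrange : ∀ (M : IntermediateField F K) (y : K),
      y ∈ (algebraMap (↥M) K).range ↔ y ∈ M := by
    intro M y
    constructor
    · rintro ⟨z, rfl⟩; exact z.2
    · intro h; exact ⟨⟨y, h⟩, rfl⟩
  have hxp' : ∀ (M : IntermediateField F K) (y : K), y ^ p ∈ (algebraMap (↥M) K).range := by
    intro M y
    obtain ⟨c, hc⟩ := hall y
    exact (hrange M _).mpr (hc ▸ M.algebraMap_mem c)
  have hxint : IsIntegral (↥E) x := Algebra.IsIntegral.isIntegral x
  have hxnotE : x ∉ (algebraMap (↥E) K).range := fun h => hxE ((hrange E x).mp h)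
  have hdx : Module.finrank (↥E) (IntermediateField.adjoin (↥E) {x}) = p :=
    aux_adjoin_finrank p x hxnotE (hxp' E x)
  -- `K = E(x)`
  have htop : IntermediateField.adjoin (↥E) {x} = ⊤ := by
    rw [eq_top_iff]
    intro y _
    by_cases hy : y ∈ E
    · exact (IntermediateField.adjoin (↥E) {x}).algebraMap_mem ⟨y, hy⟩
    · have hylt : E < IntermediateField.restrictScalars F (IntermediateField.adjoin (↥E) {y}) := by
        constructor
        · intro z hz
          exact (IntermediateField.adjoin (↥E) {y}).algebraMap_mem ⟨z, hz⟩
        · intro hle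
          exact hy (hle (IntermediateField.mem_adjoin_simple_self (↥E) y))
      have hxy : x ∈ IntermediateField.adjoin (↥E) {y} := hmax _ hylt
      have hdy : Module.finrank (↥E) (IntermediateField.adjoin (↥E) {y}) = p :=
        aux_adjoin_finrank p y (fun h => hy ((hrange E y).mp h)) (hxp' E y)
      have hle : IntermediateField.adjoin (↥E) {x} ≤ IntermediateField.adjoin (↥E) {y} :=
        (IntermediateField.adjoin_simple_le_iff).mpr hxy
      have heq : IntermediateField.adjoin (↥E) {x} = IntermediateField.adjoin (↥E) {y} :=
        IntermediateField.eq_of_le_of_finrank_eq hle (by rw [hdx, hdy])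
      rw [heq]
      exact IntermediateField.mem_adjoin_simple_self (↥E) y
  have hadj : Algebra.adjoin (↥E) ({x} : Set K) = ⊤ := by
    have := IntermediateField.adjoin_simple_toSubalgebra_of_isAlgebraic hxint.isAlgebraic
    rw [htop] at this
    rw [← this, IntermediateField.top_toSubalgebra]
  -- conclude
  intro h0
  have hD0 : KaehlerDifferential.D (↥E) K x = 0 := by
    have := KaehlerDifferential.map_D F (↥E) K K x
    rw [h0, map_zero] at this
    simpa using this.symm
  have hsub : Subsingleton (KaehlerDifferential (↥E) K) := by
    have h1 := aux_span_D x hadj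
    rw [hD0, Submodule.span_zero_singleton] at h1
    constructor
    intro a b
    have ha : a ∈ (⊥ : Submodule K (KaehlerDifferential (↥E) K)) := by rw [h1]; trivial
    have hb : b ∈ (⊥ : Submodule K (KaehlerDifferential (↥E) K)) := by rw [h1]; trivial
    simp only [Submodule.mem_bot] at ha hb
    rw [ha, hb]
  haveI : Algebra.FormallyUnramified (↥E) K := ⟨hsub⟩
  haveI : Algebra.IsSeparable (↥E) K :=
    (Algebra.FormallyUnramified.iff_isSeparable (K := ↥E) K).mp inferInstance
  -- but `x` is inseparable over `E`
  have hsep := Algebra.IsSeparable.isSeparable (↥E) x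
  haveI : CharP (↥E) p := (algebraMap (↥E) K).charP (algebraMap (↥E) K).injective p
  haveI : ExpChar (↥E) p := ExpChar.prime hp
  have h1 : (minpoly (↥E) x).natSepDegree = 1 := by
    rw [← mem_perfectClosure_iff_natSepDegree_eq_one, mem_perfectClosure_iff_pow_mem p]
    exact ⟨1, by simpa using hxp' E x⟩
  have h2 := hsep.natSepDegree_eq_natDegree
  have h3 : (minpoly (↥E) x).natDegree = 1 := by omega
  apply hxnotE
  rw [← minpoly.degree_eq_one_iff, degree_eq_natDegree (minpoly.ne_zero hxint), h3]
  rfl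

end Aux

section Key

open Polynomial IntermediateField

theorem aux_key (p : ℕ) [Fact p.Prime] (n : ℕ) :
    ∀ (F K : Type u) [Field F] [Field K], ∀ [Algebra F K] [CharP K p],
    ∀ [FiniteDimensional F K], Module.finrank F K = n →
    (∀ x : K, x ^ p ∈ (algebraMap F K).range) →
    p ^ (Module.finrank K (KaehlerDifferential F K)) = Module.finrank F K := by
  induction n using Nat.strong_induction_on with
  | _ n IH =>
  intro F K _ _ _ _ _ hn hall
  have hp : p.Prime := Fact.out
  by_cases hsurj : Function.Surjective (algebraMap F K)
  · have e : F ≃ₐ[F] K :=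
      AlgEquiv.ofBijective (Algebra.ofId F K) ⟨(algebraMap F K).injective, hsurj⟩
    have h1 : Module.finrank F K = 1 := by
      rw [← e.toLinearEquiv.finrank_eq, Module.finrank_self]
    have h2 : (⊤ : Submodule K (KaehlerDifferential F K)) = ⊥ := by
      rw [← KaehlerDifferential.span_range_derivation, Submodule.span_eq_bot]
      rintro _ ⟨y, rfl⟩
      obtain ⟨c, rfl⟩ := hsurj y
      exact Derivation.map_algebraMap _ c
    have hsub : Subsingleton (KaehlerDifferential F K) := by
      constructor
      intro a b
      have ha : a ∈ (⊥ : Submodule K (KaehlerDifferential F K)) := h2 ▸ Submodule.mem_top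
      have hb : b ∈ (⊥ : Submodule K (KaehlerDifferential F K)) := h2 ▸ Submodule.mem_top
      simp only [Submodule.mem_bot] at ha hb
      rw [ha, hb]
    rw [h1, Module.finrank_zero_of_subsingleton, pow_zero]
  · have hex : ∃ x : K, x ∉ (algebraMap F K).range := by
      by_contra h
      push_neg at h
      exact hsurj fun y => h y
    obtain ⟨x, hx⟩ := hex
    set F' := F⟮x⟯ with hF'
    haveI : FiniteDimensional (↥F') K := FiniteDimensional.right F (↥F') K
    have hdF : Module.finrank F (↥F') = p := aux_adjoin_finrank p x hx (hall x)
    have htower : Module.finrank F (↥F') * Module.finrank (↥F') K = n := by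
      rw [← hn]; exact Module.finrank_mul_finrank F (↥F') K
    set m := Module.finrank (↥F') K with hm
    have hmn : m < n := by
      have hpos : 0 < m := Module.finrank_pos
      have h2 := hp.two_le
      nlinarith
    have hall' : ∀ y : K, y ^ p ∈ (algebraMap (↥F') K).range := fun y => by
      obtain ⟨c, hc⟩ := hall y
      exact ⟨⟨y ^ p, hc ▸ F'.algebraMap_mem c⟩, rfl⟩
    have hIH := IH m hmn (↥F') K rfl hall'
    set g := IntermediateField.AdjoinSimple.gen F x with hg
    have hgadj : Algebra.adjoin F ({g} : Set (↥F')) = ⊤ := by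
      apply Subalgebra.map_injective (f := F'.val) F'.val.injective
      rw [AlgHom.map_adjoin]
      have h1 : F'.val '' {g} = {x} := by
        simp [hg, Set.image_singleton]
      rw [h1, Algebra.map_top, F'.range_val,
        IntermediateField.adjoin_simple_toSubalgebra_of_isAlgebraic
          (Algebra.IsIntegral.isIntegral x).isAlgebraic]
    have hspan' : Submodule.span (↥F') {KaehlerDifferential.D F (↥F') g} = ⊤ :=
      aux_span_D g hgadj
    have hrange : LinearMap.range (KaehlerDifferential.mapBaseChange F (↥F') K)
        = Submodule.span K {KaehlerDifferential.D F K x} := by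
      apply le_antisymm
      · rintro _ ⟨t, rfl⟩
        induction t with
        | zero => simp
        | add a b ha hb => rw [map_add]; exact add_mem ha hb
        | tmul c ω =>
          rw [KaehlerDifferential.mapBaseChange_tmul]
          have hω : ω ∈ Submodule.span (↥F') {KaehlerDifferential.D F (↥F') g} :=
            hspan' ▸ Submodule.mem_top
          obtain ⟨c', rfl⟩ := Submodule.mem_span_singleton.mp hω
          rw [map_smul, KaehlerDifferential.map_D,
            IntermediateField.AdjoinSimple.algebraMap_gen]
          exact Submodule.smul_mem _ _ (Submodule.smul_mem _ _
            (Submodule.mem_span_singleton_self _))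
      · rw [Submodule.span_le, Set.singleton_subset_iff]
        refine ⟨(1 : K) ⊗ₜ KaehlerDifferential.D F (↥F') g, ?_⟩
        rw [KaehlerDifferential.mapBaseChange_tmul, one_smul, KaehlerDifferential.map_D,
          IntermediateField.AdjoinSimple.algebraMap_gen]
    have hker : LinearMap.ker (KaehlerDifferential.map F (↥F') K K)
        = Submodule.span K {KaehlerDifferential.D F K x} :=
      (KaehlerDifferential.range_mapBaseChange F (↥F') K).symm.trans hrange
    have hD := aux_D_ne_zero p x hx hall
    have hsurj2 := KaehlerDifferential.map_surjective F (↥F') K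
    haveI : Module.Finite K (KaehlerDifferential F K) := inferInstance
    have hrank : Module.finrank K (KaehlerDifferential F K) =
        Module.finrank K (KaehlerDifferential (↥F') K) + 1 := by
      have h1 := LinearMap.finrank_range_add_finrank_ker
        (KaehlerDifferential.map F (↥F') K K)
      rw [LinearMap.range_eq_top.mpr hsurj2, hker, finrank_top,
        finrank_span_singleton hD] at h1
      omega
    rw [hrank, pow_succ, hIH, hn, ← htower, hdF, mul_comm]

end Key

/-- Let `K` be a field of characteristic `p > 0` with `[K : K^p] = p^r` finite, and let
`κ` be an intermediate field `K^p ⊆ κ ⊆ K`.  Let `Ω` be the cokernel of the canonical map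
`Ω_{κ/K^p} ⊗_κ K → Ω_{K/K^p}` and `d = dim_K Ω`.  Then `p^d = [K : κ]`, and `d = r` if and
only if `κ = K^p`. -/
theorem stmt11 (p r : ℕ) [Fact p.Prime] (K : Type*) [Field K] [CharP K p]
    (κ : Subfield K) (hκ : (frobenius K p).fieldRange ≤ κ)
    (hfin : FiniteDimensional (↥(frobenius K p).fieldRange) K)
    (hr : Module.finrank (↥(frobenius K p).fieldRange) K = p ^ r) :
    letI : Algebra ↥(frobenius K p).fieldRange ↥κ := (Subfield.inclusion hκ).toAlgebra
    letI : IsScalarTower ↥(frobenius K p).fieldRange ↥κ K :=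
      IsScalarTower.of_algebraMap_eq fun x => rfl
    ∀ d : ℕ, d = Module.finrank K
        ((KaehlerDifferential ↥(frobenius K p).fieldRange K) ⧸
          LinearMap.range (KaehlerDifferential.mapBaseChange ↥(frobenius K p).fieldRange ↥κ K)) →
      p ^ d = Module.finrank ↥κ K ∧ (d = r ↔ κ = (frobenius K p).fieldRange) := by
  letI _i1 : Algebra (↥(frobenius K p).fieldRange) (↥κ) := (Subfield.inclusion hκ).toAlgebra
  letI _i2 : IsScalarTower (↥(frobenius K p).fieldRange) (↥κ) K :=
    IsScalarTower.of_algebraMap_eq fun x => rfl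
  intro d hd
  have hp : p.Prime := Fact.out
  set F := ↥(frobenius K p).fieldRange with hF
  haveI : FiniteDimensional (↥κ) K := FiniteDimensional.right F (↥κ) K
  have hallκ : ∀ x : K, x ^ p ∈ (algebraMap (↥κ) K).range := fun x =>
    ⟨⟨x ^ p, hκ ⟨x, rfl⟩⟩, rfl⟩
  -- identify the cokernel with `Ω[K⁄κ]`
  have e : ((KaehlerDifferential F K) ⧸
      LinearMap.range (KaehlerDifferential.mapBaseChange F (↥κ) K)) ≃ₗ[K]
      KaehlerDifferential (↥κ) K :=
    (Submodule.quotEquivOfEq _ _ (KaehlerDifferential.range_mapBaseChange F (↥κ) K)).trans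
      ((KaehlerDifferential.map F (↥κ) K K).quotKerEquivOfSurjective
        (KaehlerDifferential.map_surjective F (↥κ) K))
  have hd' : d = Module.finrank K (KaehlerDifferential (↥κ) K) := hd.trans e.finrank_eq
  have h1 : p ^ d = Module.finrank (↥κ) K := by
    rw [hd']
    exact aux_key p (Module.finrank (↥κ) K) (↥κ) K rfl hallκ
  refine ⟨h1, ?_, ?_⟩
  · intro hdr
    have h2 : Module.finrank (↥κ) K = p ^ r := by rw [← h1, hdr]
    haveI : FiniteDimensional F (↥κ) := FiniteDimensional.left F (↥κ) K
    have h3 : Module.finrank F (↥κ) * Module.finrank (↥κ) K = Module.finrank F K :=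
      Module.finrank_mul_finrank F (↥κ) K
    have h4 : Module.finrank F (↥κ) = 1 := by
      rw [h2, hr] at h3
      have hpos : 0 < p ^ r := Nat.pow_pos hp.pos
      rcases Nat.lt_or_ge (Module.finrank F (↥κ)) 2 with h | h
      · have hpos2 : 0 < Module.finrank F (↥κ) := Module.finrank_pos
        omega
      · nlinarith
    have h5 : (⊥ : Subalgebra F (↥κ)) = ⊤ := Subalgebra.bot_eq_top_of_finrank_eq_one h4
    refine le_antisymm ?_ hκ
    intro y hy
    have h6 : (⟨y, hy⟩ : ↥κ) ∈ (⊥ : Subalgebra F (↥κ)) := h5.symm ▸ trivial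
    obtain ⟨c, hc⟩ := Algebra.mem_bot.mp h6
    have h8 : ((algebraMap F (↥κ)) c : K) ∈ (frobenius K p).fieldRange := c.2
    have h7 : ((algebraMap F (↥κ)) c : K) = y := by
      first
      | rw [hc]
      | rw [← hc]
    rwa [h7] at h8
  · intro hEq
    have h2 : Module.finrank (↥κ) K = p ^ r := by
      rw [hEq]
      exact hr
    exact Nat.pow_right_injective hp.two_le (h1.trans h2)
end
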